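/- Let (τ, T, ≤) be a weak stability condition on the abelian category 𝒜 with respect to cl, and suppose 𝒜 is noetherian and τ-artinian. Then for every nonzero object X of 𝒜 there exists a unique τ^max ∈ T such that: some nonzero τ-semistable subobject B ⊆ X has τ(cl B) = τ^max, and every nonzero τ-semistable subobject A ⊆ X has τ(cl A) ≤ τ^max. -/

import Mathlib

open CategoryTheory CategoryTheory.Limits

namespace JoyceIII

universe u v

variable {𝒜 : Type u} [Category.{v} 𝒜] [Abelian 𝒜]
variable {K : Type*} [AddCommGroup K] {T : Type*} [LinearOrder T]

/-- `α ∈ C(𝒜)`: `α` is the class of some nonzero object of `𝒜`. -/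
def InC (cl : 𝒜 → K) (α : K) : Prop := ∃ X : 𝒜, ¬ IsZero X ∧ cl X = α

/-- `cl` is additive on short exact sequences: `cl Y = cl X + cl Z` for every
short exact sequence `0 → X → Y → Z → 0`. -/
def ClAdditive (cl : 𝒜 → K) : Prop :=
  ∀ S : ShortComplex 𝒜, S.ShortExact → cl S.X₂ = cl S.X₁ + cl S.X₃

/-- `cl X = 0` implies `X ≅ 0`. -/
def ClNondeg (cl : 𝒜 → K) : Prop := ∀ X : 𝒜, cl X = 0 → IsZero X

/-- `(τ, T, ≤)` is a weak stability condition: the weak seesaw inequality holds. -/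
def IsWeakStability (cl : 𝒜 → K) (τ : K → T) : Prop :=
  ∀ α β γ : K, InC cl α → InC cl β → InC cl γ → β = α + γ →
    (τ α ≤ τ β ∧ τ β ≤ τ γ) ∨ (τ γ ≤ τ β ∧ τ β ≤ τ α)

/-- `(τ, T, ≤)` is a stability condition: the seesaw inequality holds. -/
def IsStability (cl : 𝒜 → K) (τ : K → T) : Prop :=
  ∀ α β γ : K, InC cl α → InC cl β → InC cl γ → β = α + γ →
    (τ α < τ β ∧ τ β < τ γ) ∨ (τ γ < τ β ∧ τ β < τ α) ∨ (τ α = τ β ∧ τ β = τ γ)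

/-- The quotient object `X/S` of `X` by a subobject `S`, i.e. the cokernel of
the inclusion `S → X`. -/
noncomputable def quotBySub {X : 𝒜} (S : Subobject X) : 𝒜 := cokernel S.arrow

/-- The quotient `B / A` of subobjects `A ≤ B` of `X` (implemented as the
cokernel of the inclusion `A ⊓ B → B`, which agrees with `B / A` when `A ≤ B`). -/
noncomputable def subQuot {X : 𝒜} (A B : Subobject X) : 𝒜 :=
  cokernel (Subobject.ofLE (A ⊓ B) B inf_le_right)

/-- `X` is `τ`-semistable: `X` is nonzero and every subobject `S ⊆ X` with
`S ≇ 0`, `S ≠ X` satisfies `τ(cl S) ≤ τ(cl (X/S))`. -/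
def Semistable (cl : 𝒜 → K) (τ : K → T) (X : 𝒜) : Prop :=
  ¬ IsZero X ∧ ∀ S : Subobject X, ¬ IsZero ((S : 𝒜)) → S ≠ ⊤ →
    τ (cl ((S : 𝒜))) ≤ τ (cl (quotBySub S))

/-- `X` is `τ`-stable: `X` is nonzero and every subobject `S ⊆ X` with
`S ≇ 0`, `S ≠ X` satisfies `τ(cl S) < τ(cl (X/S))`. -/
def Stable (cl : 𝒜 → K) (τ : K → T) (X : 𝒜) : Prop :=
  ¬ IsZero X ∧ ∀ S : Subobject X, ¬ IsZero ((S : 𝒜)) → S ≠ ⊤ →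
    τ (cl ((S : 𝒜))) < τ (cl (quotBySub S))

/-- `𝒜` is noetherian: all ascending chains of subobjects stabilize. -/
def CatNoetherian (ℬ : Type u) [Category.{v} ℬ] [Abelian ℬ] : Prop :=
  ∀ (X : ℬ) (A : ℕ → Subobject X), (∀ n, A n ≤ A (n + 1)) →
    ∃ N, ∀ n, N ≤ n → A n = A N

/-- `𝒜` is `τ`-artinian: there is no infinite chain of subobjects
`⋯ ⊆ A₂ ⊆ A₁ ⊆ X` with `A (n+1) ≠ A n` and `τ(cl A (n+1)) ≥ τ(cl (A n / A (n+1)))`. -/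
def TauArtinian (cl : 𝒜 → K) (τ : K → T) : Prop :=
  ¬ ∃ (X : 𝒜) (A : ℕ → Subobject X),
      (∀ n, A (n + 1) ≤ A n) ∧ (∀ n, A (n + 1) ≠ A n) ∧
      ∀ n, τ (cl (subQuot (A (n + 1)) (A n))) ≤ τ (cl ((A (n + 1) : 𝒜)))

set_option linter.unusedSectionVars false
set_option linter.unusedVariables false

section Aux

variable {cl : 𝒜 → K} {τ : K → T}

lemma ses_of_mono (hadd : ClAdditive cl) {P Y : 𝒜} (f : P ⟶ Y) [Mono f] :
    cl Y = cl P + cl (cokernel f) :=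
  hadd (ShortComplex.mk f (cokernel.π f) (cokernel.condition f))
    { exact := (ShortComplex.mk f (cokernel.π f) (cokernel.condition f)).exact_of_g_is_cokernel
        (cokernelIsCokernel f) }

lemma ses_of_epi (hadd : ClAdditive cl) {Y Q : 𝒜} (e : Y ⟶ Q) [Epi e] :
    cl Y = cl (kernel e) + cl Q :=
  hadd (ShortComplex.mk (kernel.ι e) e (kernel.condition e))
    { exact := (ShortComplex.mk (kernel.ι e) e (kernel.condition e)).exact_of_f_is_kernel
        (kernelIsKernel e) }

lemma cl_zero (hadd : ClAdditive cl) {Z : 𝒜} (hZ : IsZero Z) : cl Z = 0 := by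
  have h := hadd (ShortComplex.mk (𝟙 Z) (𝟙 Z) (hZ.eq_of_src _ _))
    { exact := ShortComplex.exact_of_isZero_X₂ _ hZ }
  exact (left_eq_add.mp h)

lemma isZero_cokernel_of_epi {P Y : 𝒜} (f : P ⟶ Y) [Epi f] : IsZero (cokernel f) :=
  IsZero.of_epi_eq_zero (cokernel.π f) (cokernel.π_of_epi f)

lemma cl_iso (hadd : ClAdditive cl) {P Q : 𝒜} (e : P ≅ Q) : cl P = cl Q := by
  have h := ses_of_mono hadd e.hom
  rw [cl_zero hadd (isZero_cokernel_of_epi e.hom), add_zero] at h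
  exact h.symm

lemma seesaw (hwsc : IsWeakStability cl τ) {P Y Q : 𝒜}
    (hP : ¬ IsZero P) (hY : ¬ IsZero Y) (hQ : ¬ IsZero Q)
    (h : cl Y = cl P + cl Q) :
    (τ (cl P) ≤ τ (cl Y) ∧ τ (cl Y) ≤ τ (cl Q)) ∨
      (τ (cl Q) ≤ τ (cl Y) ∧ τ (cl Y) ≤ τ (cl P)) :=
  hwsc _ _ _ ⟨P, hP, rfl⟩ ⟨Y, hY, rfl⟩ ⟨Q, hQ, rfl⟩ h

lemma epi_of_isZero_cokernel {P Y : 𝒜} (f : P ⟶ Y) (h : IsZero (cokernel f)) : Epi f :=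
  Abelian.epi_of_cokernel_π_eq_zero _ (h.eq_zero_of_tgt _)

lemma eq_of_isIso_ofLE {X : 𝒜} {S A : Subobject X} (h : S ≤ A)
    [IsIso (Subobject.ofLE S A h)] : S = A :=
  le_antisymm h (Subobject.le_of_comm (inv (Subobject.ofLE S A h))
    (by rw [IsIso.inv_comp_eq, Subobject.ofLE_arrow]))

lemma cokernel_ofLE_nonzero {X : 𝒜} {S A : Subobject X} (h : S ≤ A) (hne : S ≠ A) :
    ¬ IsZero (cokernel (Subobject.ofLE S A h)) := by
  intro hz
  haveI : Epi (Subobject.ofLE S A h) := epi_of_isZero_cokernel _ hz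
  haveI : IsIso (Subobject.ofLE S A h) := isIso_of_mono_of_epi _
  exact hne (eq_of_isIso_ofLE h)

lemma subQuot_cl (hadd : ClAdditive cl) {X : 𝒜} (S A : Subobject X) :
    cl ((A : 𝒜)) = cl (((S ⊓ A : Subobject X) : 𝒜)) + cl (subQuot S A) :=
  ses_of_mono hadd (Subobject.ofLE (S ⊓ A) A inf_le_right)

lemma subQuot_cl_of_le (hadd : ClAdditive cl) {X : 𝒜} {S A : Subobject X} (h : S ≤ A) :
    cl ((A : 𝒜)) = cl ((S : 𝒜)) + cl (subQuot S A) := by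
  have h2 := subQuot_cl hadd S A
  rwa [congrArg (fun P : Subobject X => cl ((P : 𝒜))) (inf_eq_left.mpr h)] at h2

lemma subQuot_nonzero {X : 𝒜} {S A : Subobject X} (hle : S ≤ A) (hne : S ≠ A) :
    ¬ IsZero (subQuot S A) := by
  refine cokernel_ofLE_nonzero inf_le_right (fun h => hne ?_)
  rwa [inf_eq_left.mpr hle] at h

lemma quotBySub_nonzero {A : 𝒜} {S : Subobject A} (h : S ≠ ⊤) : ¬ IsZero (quotBySub S) := by
  intro hz
  haveI : Epi S.arrow := epi_of_isZero_cokernel _ hz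
  haveI : IsIso S.arrow := isIso_of_mono_of_epi _
  exact h ((Subobject.isIso_arrow_iff_eq_top _).mp inferInstance)

lemma quotBySub_cl (hadd : ClAdditive cl) {A : 𝒜} (S : Subobject A) :
    cl A = cl ((S : 𝒜)) + cl (quotBySub S) :=
  ses_of_mono hadd S.arrow


/-- F1: subobject of a semistable object has `τ` at most that of the object. -/
lemma tau_sub_le_of_semistable (hadd : ClAdditive cl) (hwsc : IsWeakStability cl τ)
    {A : 𝒜} (hA : Semistable cl τ A) {S : Subobject A} (hS : ¬ IsZero ((S : 𝒜))) :
    τ (cl ((S : 𝒜))) ≤ τ (cl A) := by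
  by_cases ht : S = ⊤
  · subst ht
    exact le_of_eq (congrArg τ (cl_iso hadd (asIso (⊤ : Subobject A).arrow)))
  · have h1 := hA.2 S hS ht
    have hq := quotBySub_nonzero ht
    have hcl := quotBySub_cl hadd S
    rcases seesaw hwsc hS hA.1 hq hcl with ⟨h2, _⟩ | ⟨h2, _⟩
    · exact h2
    · exact le_trans h1 h2

/-- F2: a nonzero quotient of a semistable object has `τ` at least that of the object. -/
lemma tau_quot_ge_of_semistable (hadd : ClAdditive cl) (hwsc : IsWeakStability cl τ)
    {A Q : 𝒜} (hA : Semistable cl τ A) (e : A ⟶ Q) [Epi e] (hQ : ¬ IsZero Q) :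
    τ (cl A) ≤ τ (cl Q) := by
  set S := kernelSubobject e with hSdef
  by_cases hz : IsZero ((S : 𝒜))
  · have hk0 : kernel.ι e = 0 :=
      (IsZero.of_iso hz (kernelSubobjectIso e).symm).eq_zero_of_src _
    haveI : Mono e := Abelian.mono_of_kernel_ι_eq_zero _ hk0
    haveI : IsIso e := isIso_of_mono_of_epi _
    exact le_of_eq (congrArg τ (cl_iso hadd (asIso e)))
  · by_cases ht : S = ⊤
    · exfalso
      have h0 : S.arrow ≫ e = 0 := kernelSubobject_arrow_comp e
      rw [ht] at h0
      haveI : Epi ((⊤ : Subobject A).arrow) := inferInstance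
      have he0 : e = 0 :=
        (cancel_epi ((⊤ : Subobject A).arrow)).mp (by rw [comp_zero]; exact h0)
      exact hQ (IsZero.of_epi_eq_zero e he0)
    · have h1 := hA.2 S hz ht
      have hk := quotBySub_cl hadd S
      have he := ses_of_epi hadd e
      have hSk : cl ((S : 𝒜)) = cl (kernel e) := cl_iso hadd (kernelSubobjectIso e)
      have hQq : cl (quotBySub S) = cl Q := by
        rw [hSk] at hk
        exact add_left_cancel (hk.symm.trans he)
      have hq : ¬ IsZero (quotBySub S) := quotBySub_nonzero ht
      rcases seesaw hwsc hz hA.1 hq hk with ⟨_, h3⟩ | ⟨_, h3⟩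
      · rw [← hQq]; exact h3
      · rw [← hQq]; exact le_trans h3 h1

/-- Push a subobject of the underlying object of a subobject into the ambient object. -/
noncomputable def push {X : 𝒜} (A : Subobject X) (S : Subobject ((A : 𝒜))) : Subobject X :=
  Subobject.mk (S.arrow ≫ A.arrow)

lemma push_le {X : 𝒜} (A : Subobject X) (S : Subobject ((A : 𝒜))) : push A S ≤ A := by
  have h := Subobject.mk_le_mk_of_comm (f₁ := S.arrow ≫ A.arrow) (f₂ := A.arrow) S.arrow rfl
  rwa [Subobject.mk_arrow] at h

noncomputable def pushIso {X : 𝒜} (A : Subobject X) (S : Subobject ((A : 𝒜))) :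
    ((push A S : Subobject X) : 𝒜) ≅ ((S : 𝒜)) :=
  Subobject.underlyingIso _

lemma push_ne {X : 𝒜} (A : Subobject X) {S : Subobject ((A : 𝒜))} (hS : S ≠ ⊤) :
    push A S ≠ A := by
  intro h
  apply hS
  have hj := Subobject.ofLE_arrow h.ge
  have harr : (push A S).arrow
      = (Subobject.underlyingIso (S.arrow ≫ A.arrow)).hom ≫ (S.arrow ≫ A.arrow) :=
    (Subobject.underlyingIso_hom_comp_eq_mk _).symm
  rw [harr] at hj
  have hsplit : ((Subobject.ofLE A (push A S) h.ge
      ≫ (Subobject.underlyingIso (S.arrow ≫ A.arrow)).hom) ≫ S.arrow) ≫ A.arrow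
      = 𝟙 _ ≫ A.arrow := by
    rw [Category.id_comp]
    exact ((Category.assoc _ _ _).trans (Category.assoc _ _ _)).trans hj
  have hsplit' := (cancel_mono A.arrow).mp hsplit
  haveI : IsSplitEpi S.arrow := ⟨⟨⟨_, hsplit'⟩⟩⟩
  haveI : IsIso S.arrow := isIso_of_mono_of_epi _
  exact (Subobject.isIso_arrow_iff_eq_top _).mp inferInstance

lemma push_nonzero {X : 𝒜} (A : Subobject X) {S : Subobject ((A : 𝒜))}
    (hS : ¬ IsZero ((S : 𝒜))) : ¬ IsZero ((push A S : Subobject X) : 𝒜) :=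
  fun h => hS (IsZero.of_iso h (pushIso A S).symm)

lemma push_cl {X : 𝒜} (hadd : ClAdditive cl) (A : Subobject X) (S : Subobject ((A : 𝒜))) :
    cl ((push A S : Subobject X) : 𝒜) = cl ((S : 𝒜)) :=
  cl_iso hadd (pushIso A S)


/-- Transfer of semistability along an isomorphism. -/
lemma semistable_of_iso (hadd : ClAdditive cl) {P Q : 𝒜} (e : P ≅ Q)
    (hP : Semistable cl τ P) : Semistable cl τ Q := by
  refine ⟨fun h => hP.1 (IsZero.of_iso h e), ?_⟩
  intro S' hS'nz hS'ne
  haveI : Mono (S'.arrow ≫ e.inv) := mono_comp _ _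
  set Sp : Subobject P := Subobject.mk (S'.arrow ≫ e.inv) with hSp
  have hiso : ((Sp : 𝒜)) ≅ ((S' : 𝒜)) := Subobject.underlyingIso _
  have hSpnz : ¬ IsZero ((Sp : 𝒜)) := fun h => hS'nz (IsZero.of_iso h hiso.symm)
  have hSpne : Sp ≠ ⊤ := by
    intro h
    haveI : IsIso (S'.arrow ≫ e.inv) := (Subobject.isIso_iff_mk_eq_top _).mpr h
    have : IsIso S'.arrow := by
      have : S'.arrow = (S'.arrow ≫ e.inv) ≫ e.hom := by simp
      rw [this]; infer_instance
    exact hS'ne ((Subobject.isIso_arrow_iff_eq_top _).mp this)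
  have h1 := hP.2 Sp hSpnz hSpne
  have harr : Sp.arrow = (Subobject.underlyingIso (S'.arrow ≫ e.inv)).hom
      ≫ (S'.arrow ≫ e.inv) := (Subobject.underlyingIso_hom_comp_eq_mk _).symm
  have hq : quotBySub Sp ≅ quotBySub S' := by
    refine (cokernelIsoOfEq harr).trans ?_
    exact (cokernelEpiComp _ _).trans (cokernelCompIsIso S'.arrow e.inv)
  have hcl1 : cl ((Sp : 𝒜)) = cl ((S' : 𝒜)) := cl_iso hadd hiso
  have hcl2 : cl (quotBySub Sp) = cl (quotBySub S') := cl_iso hadd hq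
  rwa [hcl1, hcl2] at h1

/-- The canonical map from `B` to `(B ⊔ C)/C` is an epimorphism. -/
lemma epi_toSupQuot {X : 𝒜} (B C : Subobject X) :
    Epi (Subobject.ofLE B (B ⊔ C) le_sup_left
      ≫ cokernel.π (Subobject.ofLE C (B ⊔ C) le_sup_right)) := by
  rw [Preadditive.epi_iff_cancel_zero]
  intro Z u hu
  set π := cokernel.π (Subobject.ofLE C (B ⊔ C) le_sup_right) with hπ
  set v : ((B ⊔ C : Subobject X) : 𝒜) ⟶ Z := π ≫ u with hv
  have hBv : Subobject.ofLE B (B ⊔ C) le_sup_left ≫ v = 0 := by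
    rw [hv, ← Category.assoc]; exact hu
  have hCv : Subobject.ofLE C (B ⊔ C) le_sup_right ≫ v = 0 := by
    rw [hv, ← Category.assoc, cokernel.condition, zero_comp]
  set KK := kernelSubobject v with hKK
  set Kp : Subobject X := Subobject.mk (KK.arrow ≫ (B ⊔ C).arrow) with hKp
  have hB : B ≤ Kp := by
    refine Subobject.le_mk_of_comm (factorThruKernelSubobject v _ hBv) ?_
    rw [← Category.assoc, factorThruKernelSubobject_comp_arrow, Subobject.ofLE_arrow]
  have hC : C ≤ Kp := by
    refine Subobject.le_mk_of_comm (factorThruKernelSubobject v _ hCv) ?_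
    rw [← Category.assoc, factorThruKernelSubobject_comp_arrow, Subobject.ofLE_arrow]
  have hsup : B ⊔ C ≤ Kp := sup_le hB hC
  have hj := Subobject.ofLE_arrow hsup
  have harr : Kp.arrow = (Subobject.underlyingIso (KK.arrow ≫ (B ⊔ C).arrow)).hom
      ≫ (KK.arrow ≫ (B ⊔ C).arrow) := (Subobject.underlyingIso_hom_comp_eq_mk _).symm
  rw [harr] at hj
  have hsplit : ((Subobject.ofLE (B ⊔ C) Kp hsup
      ≫ (Subobject.underlyingIso (KK.arrow ≫ (B ⊔ C).arrow)).hom) ≫ KK.arrow)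
      ≫ (B ⊔ C).arrow = 𝟙 _ ≫ (B ⊔ C).arrow := by
    simpa [Category.assoc] using hj
  have hsplit' := (cancel_mono ((B ⊔ C).arrow)).mp hsplit
  haveI : IsSplitEpi KK.arrow := ⟨⟨⟨_, hsplit'⟩⟩⟩
  have hv0 : v = 0 := by
    have h0 : KK.arrow ≫ v = KK.arrow ≫ 0 := by
      rw [comp_zero]; exact kernelSubobject_arrow_comp v
    exact (cancel_epi KK.arrow).mp h0
  have : π ≫ u = 0 := by rw [← hv, hv0]
  exact (cancel_epi π).mp (by rw [comp_zero]; exact this)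


/-- Iterate a step function. -/
def chainSeq {σ : Sort*} (f : σ → σ) (init : σ) : ℕ → σ :=
  fun n => Nat.rec init (fun _ ih => f ih) n

/-- Noetherian gives maximal elements of nonempty families of subobjects. -/
lemma exists_maximal_subobject (hnoeth : CatNoetherian 𝒜) (X : 𝒜)
    (P : Subobject X → Prop) (hne : ∃ A, P A) :
    ∃ M, P M ∧ ∀ C, P C → M ≤ C → C = M := by
  by_contra hcon
  push_neg at hcon
  obtain ⟨A₀, hA₀⟩ := hne
  have step : ∀ s : {A : Subobject X // P A}, ∃ C, P C ∧ s.1 ≤ C ∧ C ≠ s.1 :=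
    fun s => hcon s.1 s.2
  let f : {A : Subobject X // P A} → {A : Subobject X // P A} :=
    fun s => ⟨Classical.choose (step s), (Classical.choose_spec (step s)).1⟩
  let seq : ℕ → {A : Subobject X // P A} := chainSeq f ⟨A₀, hA₀⟩
  have hmono : ∀ n, (seq n).1 ≤ (seq (n + 1)).1 := fun n =>
    (Classical.choose_spec (step (seq n))).2.1
  obtain ⟨N, hN⟩ := hnoeth X (fun n => (seq n).1) hmono
  exact (Classical.choose_spec (step (seq N))).2.2
    ((hN (N + 1) (Nat.le_succ N)).trans rfl)

/-- F3: every nonzero object has a semistable subobject with at least its `τ`. -/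
lemma exists_semistable_sub (hadd : ClAdditive cl) (hwsc : IsWeakStability cl τ)
    (hart : TauArtinian cl τ) (Y : 𝒜) (hY : ¬ IsZero Y) :
    ∃ S : Subobject Y, ¬ IsZero ((S : 𝒜)) ∧ Semistable cl τ ((S : 𝒜)) ∧
      τ (cl Y) ≤ τ (cl ((S : 𝒜))) := by
  by_contra hcon
  push_neg at hcon
  set Inv : Subobject Y → Prop := fun A => ¬ IsZero ((A : 𝒜)) ∧ τ (cl Y) ≤ τ (cl ((A : 𝒜)))
    with hInv
  have step : ∀ A : Subobject Y, Inv A → ∃ A' : Subobject Y,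
      Inv A' ∧ A' ≤ A ∧ A' ≠ A ∧ τ (cl (subQuot A' A)) ≤ τ (cl ((A' : 𝒜))) := by
    rintro A ⟨hAnz, hAτ⟩
    have hnotss : ¬ Semistable cl τ ((A : 𝒜)) := fun hss =>
      absurd hAτ (not_le.mpr (hcon A hAnz hss))
    have hforall : ¬ ∀ S : Subobject ((A : 𝒜)), ¬ IsZero ((S : 𝒜)) → S ≠ ⊤ →
        τ (cl ((S : 𝒜))) ≤ τ (cl (quotBySub S)) := fun h => hnotss ⟨hAnz, h⟩
    push_neg at hforall
    obtain ⟨S, hSnz, hSne, hdest⟩ := hforall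
    have hq : ¬ IsZero (quotBySub S) := quotBySub_nonzero hSne
    have hclA : cl ((A : 𝒜)) = cl ((S : 𝒜)) + cl (quotBySub S) := quotBySub_cl hadd S
    have hτAS : τ (cl ((A : 𝒜))) ≤ τ (cl ((S : 𝒜))) := by
      rcases seesaw hwsc hSnz hAnz hq hclA with ⟨h2, h3⟩ | ⟨_, h3⟩
      · exact absurd (le_trans h2 h3) (not_le.mpr hdest)
      · exact h3
    refine ⟨push A S, ⟨push_nonzero A hSnz, ?_⟩, push_le A S, push_ne A hSne, ?_⟩
    · rw [push_cl hadd]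
      exact le_trans hAτ hτAS
    · have h1 : cl ((A : 𝒜)) = cl ((push A S : Subobject Y) : 𝒜) + cl (subQuot (push A S) A) :=
        subQuot_cl_of_le hadd (push_le A S)
      rw [push_cl hadd] at h1
      have h3 : cl (subQuot (push A S) A) = cl (quotBySub S) :=
        add_left_cancel (h1.symm.trans hclA)
      rw [h3, push_cl hadd]
      exact le_of_lt hdest
  have hInvTop : Inv ⊤ := by
    have e : ((⊤ : Subobject Y) : 𝒜) ≅ Y := asIso (⊤ : Subobject Y).arrow
    constructor
    · exact fun h => hY (IsZero.of_iso h e.symm)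
    · exact le_of_eq (congrArg τ (cl_iso hadd e.symm))
  let f : {A : Subobject Y // Inv A} → {A : Subobject Y // Inv A} :=
    fun s => ⟨Classical.choose (step s.1 s.2), (Classical.choose_spec (step s.1 s.2)).1⟩
  let seq : ℕ → {A : Subobject Y // Inv A} := chainSeq f ⟨⊤, hInvTop⟩
  refine hart ⟨Y, fun n => (seq n).1, fun n => ?_, fun n => ?_, fun n => ?_⟩
  · exact (Classical.choose_spec (step (seq n).1 (seq n).2)).2.1
  · exact (Classical.choose_spec (step (seq n).1 (seq n).2)).2.2.1
  · exact (Classical.choose_spec (step (seq n).1 (seq n).2)).2.2.2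


end Aux

/-- `C` is a finite supremum of semistable subobjects of `X`, each with `τ`-value `≥ t`. -/
inductive IsGoodSup (cl : 𝒜 → K) (τ : K → T) {X : 𝒜} (t : T) : Subobject X → Prop
  | single (B : Subobject X) (h1 : ¬ IsZero ((B : 𝒜))) (h2 : Semistable cl τ ((B : 𝒜)))
      (h3 : t ≤ τ (cl ((B : 𝒜)))) : IsGoodSup cl τ t B
  | sup (B C : Subobject X) (h1 : ¬ IsZero ((B : 𝒜))) (h2 : Semistable cl τ ((B : 𝒜)))
      (h3 : t ≤ τ (cl ((B : 𝒜)))) (hC : IsGoodSup cl τ t C) : IsGoodSup cl τ t (B ⊔ C)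

section Aux2
variable {cl : 𝒜 → K} {τ : K → T}

lemma good_props (hadd : ClAdditive cl) (hwsc : IsWeakStability cl τ)
    {X : 𝒜} {t : T} {C : Subobject X} (h : IsGoodSup cl τ t C) :
    ¬ IsZero ((C : 𝒜)) ∧ t ≤ τ (cl ((C : 𝒜))) := by
  induction h with
  | single B h1 h2 h3 => exact ⟨h1, h3⟩
  | sup B C h1 h2 h3 hC ih =>
    obtain ⟨hCnz, hCτ⟩ := ih
    by_cases hBC : B ⊔ C = C
    · rw [hBC]; exact ⟨hCnz, hCτ⟩
    · have hne : C ≠ B ⊔ C := fun h => hBC h.symm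
      have hQnz : ¬ IsZero (cokernel (Subobject.ofLE C (B ⊔ C) le_sup_right)) :=
        cokernel_ofLE_nonzero le_sup_right hne
      have hclJ : cl ((B ⊔ C : Subobject X) : 𝒜)
          = cl ((C : 𝒜)) + cl (cokernel (Subobject.ofLE C (B ⊔ C) le_sup_right)) :=
        ses_of_mono hadd _
      have hJnz : ¬ IsZero ((B ⊔ C : Subobject X) : 𝒜) := fun h =>
        hCnz (IsZero.of_mono (Subobject.ofLE C (B ⊔ C) le_sup_right) h)
      haveI := epi_toSupQuot B C
      have hQB : τ (cl ((B : 𝒜)))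
          ≤ τ (cl (cokernel (Subobject.ofLE C (B ⊔ C) le_sup_right))) :=
        tau_quot_ge_of_semistable hadd hwsc h2
          (Subobject.ofLE B (B ⊔ C) le_sup_left
            ≫ cokernel.π (Subobject.ofLE C (B ⊔ C) le_sup_right)) hQnz
      refine ⟨hJnz, ?_⟩
      rcases seesaw hwsc hCnz hJnz hQnz hclJ with ⟨h4, _⟩ | ⟨h4, _⟩
      · exact le_trans hCτ h4
      · exact le_trans (le_trans h3 hQB) h4

lemma good_sup_closed {X : 𝒜} {t : T} {C D : Subobject X}
    (hC : IsGoodSup cl τ t C) (hD : IsGoodSup cl τ t D) : IsGoodSup cl τ t (C ⊔ D) := by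
  induction hC with
  | single B h1 h2 h3 => exact IsGoodSup.sup B D h1 h2 h3 hD
  | sup B C' h1 h2 h3 hC' ih =>
    rw [sup_assoc]
    exact IsGoodSup.sup B (C' ⊔ D) h1 h2 h3 ih

lemma good_mono {X : 𝒜} {t t' : T} (h : t ≤ t') {C : Subobject X}
    (hC : IsGoodSup cl τ t' C) : IsGoodSup cl τ t C := by
  induction hC with
  | single B h1 h2 h3 => exact IsGoodSup.single B h1 h2 (le_trans h h3)
  | sup B C' h1 h2 h3 hC' ih => exact IsGoodSup.sup B C' h1 h2 (le_trans h h3) ih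

lemma exists_greatestGood (hnoeth : CatNoetherian 𝒜) {X : 𝒜} {t : T}
    (hne : ∃ B : Subobject X, IsGoodSup cl τ t B) :
    ∃ M : Subobject X, IsGoodSup cl τ t M ∧ ∀ C, IsGoodSup cl τ t C → C ≤ M := by
  obtain ⟨M, hM, hmax⟩ := exists_maximal_subobject hnoeth X (IsGoodSup cl τ t) hne
  refine ⟨M, hM, fun C hC => ?_⟩
  have h := hmax (M ⊔ C) (good_sup_closed hM hC) le_sup_left
  exact le_sup_right.trans (le_of_eq h)

end Aux2
/-- **Step 4 of the proof of Theorem 4.4.** If `𝒜` is noetherian and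
`τ`-artinian, then every nonzero `X` has a unique `τᵐᵃˣ ∈ T` such that some
nonzero `τ`-semistable subobject `B ⊆ X` has `τ(cl B) = τᵐᵃˣ` and every
nonzero `τ`-semistable subobject `A ⊆ X` has `τ(cl A) ≤ τᵐᵃˣ`. -/
theorem existsUnique_tau_max (cl : 𝒜 → K) (τ : K → T)
    (hadd : ClAdditive cl) (hnd : ClNondeg cl)
    (hwsc : IsWeakStability cl τ)
    (hnoeth : CatNoetherian 𝒜) (hart : TauArtinian cl τ)
    (X : 𝒜) (hX : ¬ IsZero X) :
    ∃! t : T,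
      (∃ B : Subobject X, ¬ IsZero ((B : 𝒜)) ∧ Semistable cl τ ((B : 𝒜)) ∧
        τ (cl ((B : 𝒜))) = t) ∧
      ∀ A : Subobject X, ¬ IsZero ((A : 𝒜)) → Semistable cl τ ((A : 𝒜)) →
        τ (cl ((A : 𝒜))) ≤ t := by
  classical
  set R : T → Prop := fun t => ∃ B : Subobject X, ¬ IsZero ((B : 𝒜)) ∧
    Semistable cl τ ((B : 𝒜)) ∧ τ (cl ((B : 𝒜))) = t with hRdef
  by_cases hmax : ∃ t, R t ∧ ∀ t', R t' → t' ≤ t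
  · obtain ⟨t, htR, hbd⟩ := hmax
    refine ⟨t, ⟨htR, fun A h1 h2 => hbd _ ⟨A, h1, h2, rfl⟩⟩, ?_⟩
    rintro y ⟨⟨By, hy1, hy2, hy3⟩, hybd⟩
    obtain ⟨B, h1, h2, h3⟩ := htR
    exact le_antisymm (hbd _ ⟨By, hy1, hy2, hy3⟩) (h3 ▸ hybd B h1 h2)
  · exfalso
    push_neg at hmax
    obtain ⟨B₀, hB₀nz, hB₀ss, _⟩ := exists_semistable_sub hadd hwsc hart X hX
    have hR0 : R (τ (cl ((B₀ : 𝒜)))) := ⟨B₀, hB₀nz, hB₀ss, rfl⟩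
    have hgg : ∀ t, R t → ∃ M : Subobject X, IsGoodSup cl τ t M ∧
        ∀ C, IsGoodSup cl τ t C → C ≤ M := by
      rintro t ⟨B, h1, h2, h3⟩
      exact exists_greatestGood hnoeth ⟨B, IsGoodSup.single B h1 h2 (le_of_eq h3.symm)⟩
    let MF : {t // R t} → Subobject X := fun s => Classical.choose (hgg s.1 s.2)
    have hMF1 : ∀ s, IsGoodSup cl τ s.1 (MF s) :=
      fun s => (Classical.choose_spec (hgg s.1 s.2)).1
    have hMF2 : ∀ s C, IsGoodSup cl τ s.1 C → C ≤ MF s :=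
      fun s => (Classical.choose_spec (hgg s.1 s.2)).2
    have hMFnz : ∀ s, ¬ IsZero ((MF s : 𝒜)) := fun s => (good_props hadd hwsc (hMF1 s)).1
    have hMFτ : ∀ s, s.1 ≤ τ (cl ((MF s : 𝒜))) := fun s => (good_props hadd hwsc (hMF1 s)).2
    have step : ∀ s : {t // R t}, ∃ s' : {t // R t}, τ (cl ((MF s : 𝒜))) < s'.1 := by
      intro s
      obtain ⟨S, hSnz, hSss, hSτ⟩ :=
        exists_semistable_sub hadd hwsc hart ((MF s : 𝒜)) (hMFnz s)
      have hRp : R (τ (cl ((push (MF s) S : Subobject X) : 𝒜))) :=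
        ⟨push (MF s) S, push_nonzero _ hSnz,
          semistable_of_iso hadd (pushIso (MF s) S).symm hSss, rfl⟩
      obtain ⟨t', ht'R, ht'⟩ := hmax _ hRp
      refine ⟨⟨t', ht'R⟩, ?_⟩
      calc τ (cl ((MF s : 𝒜))) ≤ τ (cl ((S : 𝒜))) := hSτ
        _ = τ (cl ((push (MF s) S : Subobject X) : 𝒜)) := by rw [push_cl hadd]
        _ < t' := ht'
    let f : {t // R t} → {t // R t} := fun s => Classical.choose (step s)
    let seq : ℕ → {t // R t} := chainSeq f ⟨_, hR0⟩
    let A : ℕ → Subobject X := fun n => MF (seq n)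
    have hseq : ∀ n, seq (n + 1) = Classical.choose (step (seq n)) := fun n => rfl
    have key : ∀ n, τ (cl ((A n : 𝒜))) < τ (cl ((A (n + 1) : 𝒜))) := by
      intro n
      have h1 : τ (cl ((MF (seq n) : 𝒜))) < (seq (n + 1)).1 := by
        rw [hseq n]; exact Classical.choose_spec (step (seq n))
      exact lt_of_lt_of_le h1 (hMFτ (seq (n + 1)))
    have hle : ∀ n, A (n + 1) ≤ A n := by
      intro n
      have ht : (seq n).1 ≤ (seq (n + 1)).1 := by
        rw [hseq n]
        exact le_of_lt (lt_of_le_of_lt (hMFτ (seq n)) (Classical.choose_spec (step (seq n))))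
      exact hMF2 (seq n) _ (good_mono ht (hMF1 (seq (n + 1))))
    have hne : ∀ n, A (n + 1) ≠ A n := by
      intro n h
      have := key n
      rw [h] at this
      exact lt_irrefl _ this
    refine hart ⟨X, A, hle, hne, fun n => ?_⟩
    have hQnz := subQuot_nonzero (hle n) (hne n)
    have hcl := subQuot_cl_of_le hadd (hle n)
    rcases seesaw hwsc (hMFnz (seq (n + 1))) (hMFnz (seq n)) hQnz hcl with ⟨h2, _⟩ | ⟨h2, h3⟩
    · exact absurd (key n) (not_lt.mpr h2)
    · exact le_trans h2 h3

end JoyceIII
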